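/- For vertex sets V_1 and V_2 in a finite graph G, the function assigning to each A ⊆ V_1 the maximum number of pairwise vertex-disjoint paths from A to V_2 in G is the rank function of a matroid on V_1. -/

import Mathlib

set_option linter.unusedSectionVars false
set_option linter.unusedVariables false
set_option maxHeartbeats 1000000

/-- There are `q` pairwise vertex-disjoint paths in `G`, each starting in `A` and ending
in `B` (a path may be a single vertex when its start lies in `A ∩ B`). -/
def HasDisjointPaths {V : Type*} (G : SimpleGraph V) (A B : Set V) (q : ℕ) : Prop :=
  ∃ (a b : Fin q → V) (w : ∀ i, G.Walk (a i) (b i)),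
    (∀ i, a i ∈ A ∧ b i ∈ B ∧ (w i).IsPath) ∧
    ∀ i j : Fin q, i ≠ j → (w i).support.Disjoint (w j).support

/-- The maximum number `κ(A)` of pairwise vertex-disjoint `A`–`V₂` paths in `G`. -/
noncomputable def maxDisjointPaths {V : Type*} (G : SimpleGraph V) (V₂ A : Set V) : ℕ :=
  sSup {q : ℕ | HasDisjointPaths G A V₂ q}

open SimpleGraph

section MengerAux
variable {V : Type*} [DecidableEq V]

def GSep (G : SimpleGraph V) (A B S : Set V) : Prop :=
  ∀ ⦃a b : V⦄ (w : G.Walk a b), a ∈ A → b ∈ B → ∃ s ∈ S, s ∈ w.support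

/-- Restriction of `G` to vertices of `W`. -/
def Gres (G : SimpleGraph V) (W : Set V) : SimpleGraph V where
  Adj x y := G.Adj x y ∧ x ∈ W ∧ y ∈ W
  symm := ⟨fun x y ⟨h, hx, hy⟩ => ⟨h.symm, hy, hx⟩⟩
  loopless := ⟨fun x ⟨h, _, _⟩ => G.irrefl h⟩

lemma Gres_le (G : SimpleGraph V) (W : Set V) : Gres G W ≤ G := fun _ _ h => h.1

/-- `G` minus one edge. -/
def GdelE (G : SimpleGraph V) (e₀ : Sym2 V) : SimpleGraph V where
  Adj x y := G.Adj x y ∧ s(x, y) ≠ e₀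
  symm := ⟨fun x y ⟨h, hne⟩ => ⟨h.symm, by rwa [Sym2.eq_swap]⟩⟩
  loopless := ⟨fun x ⟨h, _⟩ => G.irrefl h⟩

lemma GdelE_le (G : SimpleGraph V) (e₀ : Sym2 V) : GdelE G e₀ ≤ G := fun _ _ h => h.1

/-- Transfer a walk up along `G' ≤ G`. -/
def walkUp {G' G : SimpleGraph V} (h : G' ≤ G) {x y : V} (w : G'.Walk x y) : G.Walk x y :=
  w.transfer G (fun e he => edgeSet_mono h (w.edges_subset_edgeSet he))

@[simp] lemma walkUp_support {G' G : SimpleGraph V} (h : G' ≤ G) {x y : V} (w : G'.Walk x y) :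
    (walkUp h w).support = w.support := Walk.support_transfer _ _

lemma walkUp_isPath {G' G : SimpleGraph V} (h : G' ≤ G) {x y : V} {w : G'.Walk x y}
    (hw : w.IsPath) : (walkUp h w).IsPath := by
  rw [Walk.isPath_def] at hw ⊢; rwa [walkUp_support]

lemma exists_adj_start {G : SimpleGraph V} {x y : V} (w : G.Walk x y) (h : x ≠ y) :
    ∃ c, G.Adj x c := by
  cases w with
  | nil => exact absurd rfl h
  | cons hadj _ => exact ⟨_, hadj⟩

lemma not_mem_support_gres_compl {G : SimpleGraph V} {v x y : V}
    (w : (Gres G {v}ᶜ).Walk x y) (hx : x ≠ v) : v ∉ w.support := by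
  induction w with
  | nil => simpa using (Ne.symm hx)
  | @cons u c d hadj p ih =>
    rw [Walk.support_cons, List.mem_cons]
    push_neg
    exact ⟨Ne.symm hx, ih hadj.2.2⟩

/-- Vertices reachable from `A` by walks avoiding `S` entirely. -/
def Aside (G : SimpleGraph V) (A S : Set V) : Set V :=
  {v | ∃ (a : V) (w : G.Walk a v), a ∈ A ∧ ∀ u ∈ w.support, u ∉ S}

lemma aside_disj {G : SimpleGraph V} {A B S : Set V} (hS : GSep G A B S) :
    Aside G A S ∩ Aside G B S = ∅ := by
  by_contra h
  obtain ⟨v, ⟨a, w₁, ha, h₁⟩, ⟨b, w₂, hb, h₂⟩⟩ := Set.nonempty_iff_ne_empty.2 h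
  obtain ⟨s, hsS, hsup⟩ := hS (w₁.append w₂.reverse) ha hb
  rw [Walk.support_append, List.mem_append] at hsup
  rcases hsup with hsup | hsup
  · exact h₁ s hsup hsS
  · exact h₂ s (by
      have := List.mem_of_mem_tail hsup
      rwa [Walk.support_reverse, List.mem_reverse] at this) hsS

lemma support_subset_aside {G : SimpleGraph V} {a v : V} {A S : Set V} (w : G.Walk a v)
    (hp : w.IsPath) (ha : a ∈ A) (hS : ∀ u ∈ w.support, u ∈ S → u = v) :
    ∀ u ∈ w.support, u ∈ Aside G A S ∪ S := by
  intro u hu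
  by_cases huS : u ∈ S
  · exact Or.inr huS
  refine Or.inl ⟨a, w.takeUntil u hu, ha, ?_⟩
  intro x hx hxS
  have hxw : x ∈ w.support := w.support_takeUntil_subset hu hx
  have hxv : x = v := hS x hxw hxS
  subst hxv
  -- `v` (the endpoint) cannot lie in the strict initial segment ending at `u ≠ v`
  have huv : u ≠ x := fun h => huS (h ▸ hxS)
  have hspec := w.take_spec hu
  have hnodup : w.support.Nodup := hp.support_nodup
  rw [← hspec, Walk.support_append] at hnodup
  have hxdrop : x ∈ (w.dropUntil u hu).support := Walk.end_mem_support _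
  rw [(w.dropUntil u hu).support_eq_cons, List.mem_cons] at hxdrop
  rcases hxdrop with h' | h'
  · exact huv h'.symm
  · exact (List.disjoint_of_nodup_append hnodup) hx h'

lemma sep_symm {G : SimpleGraph V} {A B S : Set V} (h : GSep G A B S) : GSep G B A S := by
  intro b a w hb ha
  obtain ⟨s, hs, hsup⟩ := h w.reverse ha hb
  exact ⟨s, hs, by simpa [Walk.support_reverse] using hsup⟩

lemma sep_univ (G : SimpleGraph V) (A B : Set V) : GSep G A B Set.univ := by
  intro a b w _ _
  exact ⟨a, trivial, w.start_mem_support⟩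

lemma exists_walk_until {G : SimpleGraph V} {a b : V} (w : G.Walk a b) (S : Set V) :
    (∃ s ∈ S, s ∈ w.support) →
    ∃ v ∈ S, ∃ w' : G.Walk a v,
      (∀ u ∈ w'.support, u ∈ S → u = v) ∧ ∀ u ∈ w'.support, u ∈ w.support := by
  induction w with
  | nil =>
    intro h
    obtain ⟨s, hs, hsup⟩ := h
    simp only [Walk.support_nil, List.mem_singleton] at hsup
    subst hsup
    exact ⟨s, hs, Walk.nil, by simp, by simp⟩
  | @cons u c d hadj p ih =>
    intro h
    by_cases hu : u ∈ S
    · exact ⟨u, hu, Walk.nil, by simp, by simp⟩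
    · obtain ⟨s, hs, hsup⟩ := h
      rw [Walk.support_cons, List.mem_cons] at hsup
      rcases hsup with rfl | hsup
      · exact absurd hs hu
      · obtain ⟨v, hv, w', h1, h2⟩ := ih ⟨s, hs, hsup⟩
        refine ⟨v, hv, Walk.cons hadj w', ?_, ?_⟩
        · intro x hx hxS
          rw [Walk.support_cons, List.mem_cons] at hx
          rcases hx with rfl | hx
          · exact absurd hxS hu
          · exact h1 x hx hxS
        · intro x hx
          rw [Walk.support_cons, List.mem_cons] at hx ⊢
          rcases hx with rfl | hx
          · exact Or.inl rfl
          · exact Or.inr (h2 x hx)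

lemma exists_path_until {G : SimpleGraph V} {a b : V} (w : G.Walk a b) (S : Set V)
    (h : ∃ s ∈ S, s ∈ w.support) :
    ∃ v ∈ S, ∃ w' : G.Walk a v, w'.IsPath ∧
      (∀ u ∈ w'.support, u ∈ S → u = v) ∧ ∀ u ∈ w'.support, u ∈ w.support := by
  obtain ⟨v, hv, w', h1, h2⟩ := exists_walk_until w S h
  exact ⟨v, hv, w'.bypass, w'.bypass_isPath,
    fun u hu => h1 u (w'.support_bypass_subset hu),
    fun u hu => h2 u (w'.support_bypass_subset hu)⟩

lemma hasDP_zero (G : SimpleGraph V) (A B : Set V) : HasDisjointPaths G A B 0 :=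
  ⟨Fin.elim0, Fin.elim0, fun i => i.elim0, fun i => i.elim0, fun i => i.elim0⟩

lemma hasDP_downward {G : SimpleGraph V} {A B : Set V} {q q' : ℕ} (h : q' ≤ q)
    (hq : HasDisjointPaths G A B q) : HasDisjointPaths G A B q' := by
  obtain ⟨a, b, w, hw, hd⟩ := hq
  exact ⟨fun i => a (Fin.castLE h i), fun i => b (Fin.castLE h i),
    fun i => w (Fin.castLE h i), fun i => hw _,
    fun i j hij => hd _ _ (fun hc => hij (Fin.castLE_injective h hc))⟩

lemma hasDP_mono_start {G : SimpleGraph V} {A A' B : Set V} {q : ℕ} (h : A ⊆ A')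
    (hq : HasDisjointPaths G A B q) : HasDisjointPaths G A' B q := by
  obtain ⟨a, b, w, hw, hd⟩ := hq
  exact ⟨a, b, w, fun i => ⟨h (hw i).1, (hw i).2⟩, hd⟩

lemma hasDP_mono_graph {G' G : SimpleGraph V} (hle : G' ≤ G) {A B : Set V} {q : ℕ}
    (hq : HasDisjointPaths G' A B q) : HasDisjointPaths G A B q := by
  obtain ⟨a, b, w, hw, hd⟩ := hq
  refine ⟨a, b, fun i => walkUp hle (w i), fun i => ⟨(hw i).1, (hw i).2.1,
    walkUp_isPath hle (hw i).2.2⟩, fun i j hij => ?_⟩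
  rw [walkUp_support, walkUp_support]
  exact hd i j hij

lemma hasDP_one {G : SimpleGraph V} {A B : Set V} {x y : V} (w : G.Walk x y)
    (hx : x ∈ A) (hy : y ∈ B) (hw : w.IsPath) : HasDisjointPaths G A B 1 :=
  ⟨fun _ => x, fun _ => y, fun _ => w, fun _ => ⟨hx, hy, hw⟩,
    fun i j hij => absurd (Subsingleton.elim i j) hij⟩

lemma hasDP_le_sep [Fintype V] {G : SimpleGraph V} {A B S : Set V} {q : ℕ}
    (hq : HasDisjointPaths G A B q) (hS : GSep G A B S) : q ≤ S.ncard := by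
  classical
  obtain ⟨a, b, w, hw, hd⟩ := hq
  have hsel : ∀ i, ∃ x, x ∈ S ∧ x ∈ (w i).support := by
    intro i
    obtain ⟨s, hs, hsup⟩ := hS (w i) (hw i).1 (hw i).2.1
    exact ⟨s, hs, hsup⟩
  choose f hfS hfsup using hsel
  have hinj : Function.Injective (fun i => (⟨f i, hfS i⟩ : ↥S)) := by
    intro i j hij
    by_contra hne
    have heq : f i = f j := congrArg Subtype.val hij
    exact hd i j hne (hfsup i) (heq ▸ hfsup j)
  calc q = Fintype.card (Fin q) := (Fintype.card_fin q).symm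
    _ ≤ Fintype.card ↥S := Fintype.card_le_of_injective _ hinj
    _ = S.ncard := by rw [← Nat.card_eq_fintype_card, Nat.card_coe_set_eq]

/-- minimum cardinality of an `A`–`B` separator. -/
noncomputable def minSep (G : SimpleGraph V) (A B : Set V) : ℕ :=
  sInf {n | ∃ S : Set V, GSep G A B S ∧ S.ncard = n}

lemma minSep_setNonempty (G : SimpleGraph V) (A B : Set V) :
    {n | ∃ S : Set V, GSep G A B S ∧ S.ncard = n}.Nonempty :=
  ⟨Set.univ.ncard, Set.univ, sep_univ G A B, rfl⟩

lemma exists_minSep (G : SimpleGraph V) (A B : Set V) :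
    ∃ S : Set V, GSep G A B S ∧ S.ncard = minSep G A B :=
  Nat.sInf_mem (minSep_setNonempty G A B)

lemma minSep_le {G : SimpleGraph V} {A B S : Set V} (h : GSep G A B S) :
    minSep G A B ≤ S.ncard :=
  Nat.sInf_le ⟨S, h, rfl⟩

lemma le_minSep {G : SimpleGraph V} {A B : Set V} {k : ℕ}
    (h : ∀ T : Set V, GSep G A B T → k ≤ T.ncard) : k ≤ minSep G A B := by
  obtain ⟨S, hS, hcard⟩ := exists_minSep G A B
  exact hcard ▸ h S hS

/-- Induction measure. -/
noncomputable def meas (G : SimpleGraph V) (A B : Set V) : ℕ :=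
  G.edgeSet.ncard * (Nat.card V + 1) + (A ∩ B).ncard

lemma meas_lt_of_inter [Fintype V] {G' G : SimpleGraph V} {A B A' B' : Set V}
    (hE : G'.edgeSet ⊆ G.edgeSet) (hI : (A' ∩ B').ncard < (A ∩ B).ncard) :
    meas G' A' B' < meas G A B := by
  have h1 : G'.edgeSet.ncard ≤ G.edgeSet.ncard := Set.ncard_le_ncard hE (Set.toFinite _)
  exact add_lt_add_of_le_of_lt (Nat.mul_le_mul_right _ h1) hI

lemma meas_lt_of_edges [Fintype V] {G' G : SimpleGraph V} {A B A' B' : Set V}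
    (hE : G'.edgeSet ⊂ G.edgeSet) : meas G' A' B' < meas G A B := by
  have h1 : G'.edgeSet.ncard < G.edgeSet.ncard := Set.ncard_lt_ncard hE (Set.toFinite _)
  have h2 : (A' ∩ B').ncard ≤ Nat.card V := by
    rw [← Set.ncard_univ]
    exact Set.ncard_le_ncard (Set.subset_univ _) (Set.toFinite _)
  calc G'.edgeSet.ncard * (Nat.card V + 1) + (A' ∩ B').ncard
      ≤ G'.edgeSet.ncard * (Nat.card V + 1) + Nat.card V := by omega
    _ < (G'.edgeSet.ncard + 1) * (Nat.card V + 1) := by ring_nf; omega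
    _ ≤ G.edgeSet.ncard * (Nat.card V + 1) := Nat.mul_le_mul_right _ (by omega)
    _ ≤ meas G A B := Nat.le_add_right _ _

end MengerAux

section Halving
variable {V : Type*} [DecidableEq V]

lemma sep_res_A {G : SimpleGraph V} {A B S : Set V} (hS : GSep G A B S) (T : Set V)
    (hT : GSep (Gres G (Aside G A S ∪ S)) A S T) : GSep G A B T := by
  intro a b w ha hb
  obtain ⟨v, hv, w', hw'path, hw'only, hw'sub⟩ :=
    exists_path_until w S (hS w ha hb)
  have hsupp : ∀ u ∈ w'.support, u ∈ Aside G A S ∪ S :=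
    support_subset_aside w' hw'path ha hw'only
  have hedges : ∀ e ∈ w'.edges, e ∈ (Gres G (Aside G A S ∪ S)).edgeSet := by
    intro e he
    induction e using Sym2.ind with
    | _ x y =>
      rw [SimpleGraph.mem_edgeSet]
      exact ⟨w'.edges_subset_edgeSet he,
        hsupp x (w'.fst_mem_support_of_mem_edges he),
        hsupp y (w'.snd_mem_support_of_mem_edges he)⟩
  obtain ⟨t, htT, htsup⟩ := hT (w'.transfer _ hedges) ha hv
  rw [Walk.support_transfer] at htsup
  exact ⟨t, htT, hw'sub t htsup⟩

lemma sep_res_B {G : SimpleGraph V} {A B S : Set V} (hS : GSep G A B S) (T : Set V)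
    (hT : GSep (Gres G (Aside G B S ∪ S)) S B T) : GSep G A B T := by
  intro a b w ha hb
  obtain ⟨s₀, hs₀, hs₀sup⟩ := hS w ha hb
  have hs₀rev : ∃ s ∈ S, s ∈ w.reverse.support :=
    ⟨s₀, hs₀, by rwa [Walk.support_reverse, List.mem_reverse]⟩
  obtain ⟨v, hv, w', hw'path, hw'only, hw'sub⟩ := exists_path_until w.reverse S hs₀rev
  have hsupp : ∀ u ∈ w'.support, u ∈ Aside G B S ∪ S :=
    support_subset_aside w' hw'path hb hw'only
  have hedges : ∀ e ∈ w'.edges, e ∈ (Gres G (Aside G B S ∪ S)).edgeSet := by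
    intro e he
    induction e using Sym2.ind with
    | _ x y =>
      rw [SimpleGraph.mem_edgeSet]
      exact ⟨w'.edges_subset_edgeSet he,
        hsupp x (w'.fst_mem_support_of_mem_edges he),
        hsupp y (w'.snd_mem_support_of_mem_edges he)⟩
  obtain ⟨t, htT, htsup⟩ := hT (w'.transfer _ hedges).reverse hv hb
  rw [Walk.support_reverse, List.mem_reverse, Walk.support_transfer] at htsup
  have := hw'sub t htsup
  rw [Walk.support_reverse, List.mem_reverse] at this
  exact ⟨t, htT, this⟩

/-- Gluing two systems of `k` disjoint paths, `A`–`S` and `S`–`B`, across a separator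
`S` of size `k`, into `k` disjoint `A`–`B` paths. -/
lemma glue [Fintype V] {G : SimpleGraph V} {A B S : Set V} {k : ℕ}
    (hSep : GSep G A B S) (hcard : S.ncard = k)
    (hA : HasDisjointPaths G A S k) (hB : HasDisjointPaths G S B k) :
    HasDisjointPaths G A B k := by
  classical
  obtain ⟨a, s, w, hw, hdisj⟩ := hA
  obtain ⟨t, b, u, hu, hudisj⟩ := hB
  -- trim the A-side paths so they meet S only at their final vertex
  have trimA : ∀ i, ∃ v ∈ S, ∃ p : G.Walk (a i) v, p.IsPath ∧
      (∀ x ∈ p.support, x ∈ S → x = v) ∧ (∀ x ∈ p.support, x ∈ (w i).support) := by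
    intro i
    exact exists_path_until (w i) S ⟨s i, (hw i).2.1, (w i).end_mem_support⟩
  choose v hvS p hp hponly hpsub using trimA
  -- trim the B-side paths so they meet S only at their first vertex (walk written from b)
  have trimB : ∀ j, ∃ v' ∈ S, ∃ q : G.Walk (b j) v', q.IsPath ∧
      (∀ x ∈ q.support, x ∈ S → x = v') ∧ (∀ x ∈ q.support, x ∈ (u j).support) := by
    intro j
    obtain ⟨v', hv', q, h1, h2, h3⟩ := exists_path_until (u j).reverse S
      ⟨t j, (hu j).1, by rw [Walk.support_reverse, List.mem_reverse];
                         exact (u j).start_mem_support⟩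
    exact ⟨v', hv', q, h1, h2, fun x hx => by
      have := h3 x hx
      rwa [Walk.support_reverse, List.mem_reverse] at this⟩
  choose v' hv'S q hq hqonly hqsub using trimB
  -- injectivity of endpoints
  have vinj : Function.Injective v := by
    intro i j hij
    by_contra hne
    exact hdisj i j hne (hpsub i _ (Walk.end_mem_support _))
      (hij ▸ hpsub j _ (Walk.end_mem_support _))
  have v'inj : Function.Injective v' := by
    intro i j hij
    by_contra hne
    exact hudisj i j hne (hqsub i _ (Walk.end_mem_support _))
      (hij ▸ hqsub j _ (Walk.end_mem_support _))
  -- bijections with S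
  haveI : Fintype ↥S := Fintype.ofFinite _
  have hcardS : Fintype.card ↥S = k := by
    rw [← Nat.card_eq_fintype_card, Nat.card_coe_set_eq, hcard]
  have hbijS : Function.Bijective (fun i : Fin k => (⟨v i, hvS i⟩ : ↥S)) := by
    rw [Fintype.bijective_iff_injective_and_card]
    exact ⟨fun i j hij => vinj (congrArg Subtype.val hij), by simp [hcardS]⟩
  have hbijT : Function.Bijective (fun j : Fin k => (⟨v' j, hv'S j⟩ : ↥S)) := by
    rw [Fintype.bijective_iff_injective_and_card]
    exact ⟨fun i j hij => v'inj (congrArg Subtype.val hij), by simp [hcardS]⟩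
  set eS := Equiv.ofBijective _ hbijS with heS
  set eT := Equiv.ofBijective _ hbijT with heT
  set σ : Fin k → Fin k := fun i => eT.symm (eS i) with hσ
  have σinj : Function.Injective σ := fun i j hij =>
    eS.injective (eT.symm.injective hij)
  have key : ∀ i, v' (σ i) = v i := by
    intro i
    have : eT (eT.symm (eS i)) = eS i := eT.apply_symm_apply _
    exact congrArg Subtype.val this
  -- the glued walks
  set C : ∀ i, G.Walk (v i) (b (σ i)) := fun i => (q (σ i)).reverse.copy (key i) rfl with hC
  have hCsup : ∀ i, (C i).support = (q (σ i)).reverse.support := fun i => Walk.support_copy _ _ _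
  have hCmem : ∀ i x, x ∈ (C i).support → x ∈ (q (σ i)).support := by
    intro i x hx
    rw [hCsup, Walk.support_reverse, List.mem_reverse] at hx
    exact hx
  have hCnodup : ∀ i, (C i).support.Nodup := by
    intro i
    rw [hCsup, Walk.support_reverse, List.nodup_reverse]
    exact (hq _).support_nodup
  -- side containments
  have hpAside : ∀ i, ∀ x ∈ (p i).support, x ∈ Aside G A S ∪ S := fun i =>
    support_subset_aside (p i) (hp i) (hw i).1 (hponly i)
  have hqAside : ∀ j, ∀ x ∈ (q j).support, x ∈ Aside G B S ∪ S := fun j =>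
    support_subset_aside (q j) (hq j) (hu j).2.1 (hqonly j)
  have hdisjAB := aside_disj hSep
  -- a vertex common to an A-part (index i) and a B-part (index σ i') forces v i = v i'
  have hcommon : ∀ i i' x, x ∈ (p i).support → x ∈ (q (σ i')).support → v i = v i' := by
    intro i i' x hxp hxq
    by_cases hxS : x ∈ S
    · have h1 : x = v i := hponly i x hxp hxS
      have h2 : x = v' (σ i') := hqonly (σ i') x hxq hxS
      rw [← h1, h2, key]
    · rcases hpAside i x hxp with hxA | hxA
      · rcases hqAside (σ i') x hxq with hxB | hxB
        · exact absurd (Set.mem_inter hxA hxB) (by rw [hdisjAB]; exact id)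
        · exact absurd hxB hxS
      · exact absurd hxA hxS
  refine ⟨a, fun i => b (σ i), fun i => (p i).append (C i),
    fun i => ⟨(hw i).1, (hu (σ i)).2.1, ?_⟩, fun i j hij => ?_⟩
  · -- IsPath
    rw [Walk.isPath_def, Walk.support_append, List.nodup_append]
    refine ⟨(hp i).support_nodup, (hCnodup i).tail, ?_⟩
    intro x hxp y hxtail hxy
    subst hxy
    have hxC : x ∈ (C i).support := List.mem_of_mem_tail hxtail
    have hxne : x ≠ v i := by
      intro h
      subst h
      have hcons := (C i).support_eq_cons
      have := hCnodup i
      rw [hcons] at this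
      exact (List.nodup_cons.1 this).1 hxtail
    have hxq : x ∈ (q (σ i)).support := hCmem i x hxC
    by_cases hxS : x ∈ S
    · exact hxne (hponly i x hxp hxS)
    · rcases hpAside i x hxp with hxA | hxA
      · rcases hqAside (σ i) x hxq with hxB | hxB
        · exact absurd (Set.mem_inter hxA hxB) (by rw [hdisjAB]; exact id)
        · exact hxS hxB
      · exact hxS hxA
  · -- Disjointness
    intro x hxi hxj
    have hmem : ∀ l, x ∈ ((p l).append (C l)).support →
        x ∈ (p l).support ∨ x ∈ (q (σ l)).support := by
      intro l hx
      rw [Walk.support_append, List.mem_append] at hx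
      rcases hx with hx | hx
      · exact Or.inl hx
      · exact Or.inr (hCmem l x (List.mem_of_mem_tail hx))
    rcases hmem i hxi with hxi' | hxi' <;> rcases hmem j hxj with hxj' | hxj'
    · exact hdisj i j hij (hpsub i x hxi') (hpsub j x hxj')
    · exact hij (vinj (hcommon i j x hxi' hxj'))
    · exact hij (vinj (hcommon j i x hxj' hxi')).symm
    · exact hudisj (σ i) (σ j) (fun h => hij (σinj h))
        (hqsub (σ i) x hxi') (hqsub (σ j) x hxj')

end Halving

section MainInduction
variable {V : Type*} [DecidableEq V]

lemma hasDP_cons {G : SimpleGraph V} {A B : Set V} {m : ℕ} {v : V}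
    (a b : Fin m → V) (w : ∀ i, G.Walk (a i) (b i))
    (hw : ∀ i, a i ∈ A ∧ b i ∈ B ∧ (w i).IsPath)
    (hd : ∀ i j, i ≠ j → (w i).support.Disjoint (w j).support)
    (hvA : v ∈ A) (hvB : v ∈ B) (hv : ∀ i, v ∉ (w i).support) :
    HasDisjointPaths G A B (m + 1) := by
  classical
  set a' : Fin (m + 1) → V := Fin.cons v a with ha'
  set b' : Fin (m + 1) → V := Fin.cons v b with hb'
  have ha0 : a' 0 = v := rfl
  have hb0 : b' 0 = v := rfl
  have has : ∀ i : Fin m, a' i.succ = a i := fun i => Fin.cons_succ _ _ _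
  have hbs : ∀ i : Fin m, b' i.succ = b i := fun i => Fin.cons_succ _ _ _
  set w' : ∀ i : Fin (m + 1), G.Walk (a' i) (b' i) := fun i =>
    Fin.cases (motive := fun i => G.Walk (a' i) (b' i))
      ((Walk.nil : G.Walk v v).copy ha0.symm hb0.symm)
      (fun i => (w i).copy (has i).symm (hbs i).symm) i with hw'
  have hw'0 : (w' 0).support = [v] := by
    simp only [hw', Fin.cases_zero, Walk.support_copy, Walk.support_nil]
  have hw's : ∀ i : Fin m, (w' i.succ).support = (w i).support := by
    intro i
    simp only [hw', Fin.cases_succ, Walk.support_copy]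
  refine ⟨a', b', w', ?_, ?_⟩
  · intro i
    induction i using Fin.cases with
    | zero => exact ⟨hvA, hvB, by rw [Walk.isPath_def, hw'0]; simp⟩
    | succ i => exact ⟨has i ▸ (hw i).1, hbs i ▸ (hw i).2.1, by
        rw [Walk.isPath_def, hw's i]; exact (hw i).2.2.support_nodup⟩
  · intro i j hij
    induction i using Fin.cases with
    | zero =>
      induction j using Fin.cases with
      | zero => exact absurd rfl hij
      | succ j =>
        intro x hx1 hx2
        rw [hw'0, List.mem_singleton] at hx1
        rw [hw's] at hx2
        exact hv j (hx1 ▸ hx2)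
    | succ i =>
      induction j using Fin.cases with
      | zero =>
        intro x hx1 hx2
        rw [hw'0, List.mem_singleton] at hx2
        rw [hw's] at hx1
        exact hv i (hx2 ▸ hx1)
      | succ j =>
        have hne : i ≠ j := fun h => hij (by rw [h])
        intro x hx1 hx2
        rw [hw's] at hx1 hx2
        exact hd i j hne hx1 hx2

lemma sep_subset_right [Fintype V] {G : SimpleGraph V} {A B S : Set V} {k : ℕ}
    (hS : GSep G A B S) (hScard : S.ncard = k)
    (hmin : ∀ T : Set V, GSep G A B T → k ≤ T.ncard)
    (hAB : A ∩ B = ∅)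
    (hfull : ∀ x y, G.Adj x y → x ∈ Aside G A S ∪ S) :
    S ⊆ B := by
  have hsepB : GSep G A B (S ∩ B) := by
    intro a b w ha hb
    have hab : a ≠ b := by
      rintro rfl
      have : a ∈ A ∩ B := ⟨ha, hb⟩
      rw [hAB] at this
      exact this.elim
    obtain ⟨c, hc⟩ := exists_adj_start w.reverse (Ne.symm hab)
    rcases hfull b c hc with hbA | hbS
    · obtain ⟨a', w', ha', havoid⟩ := hbA
      obtain ⟨s, hsS, hssup⟩ := hS w' ha' hb
      exact absurd hsS (havoid s hssup)
    · exact ⟨b, ⟨hbS, hb⟩, w.end_mem_support⟩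
  have hle : k ≤ (S ∩ B).ncard := hmin _ hsepB
  have heq : S ∩ B = S := Set.eq_of_subset_of_ncard_le Set.inter_subset_left
    (by rw [hScard]; exact hle) (Set.toFinite _)
  intro x hx
  rw [← heq] at hx
  exact hx.2

theorem mengerAux [Fintype V] :
    ∀ (N : ℕ) (G : SimpleGraph V) (A B : Set V), meas G A B ≤ N →
      HasDisjointPaths G A B (minSep G A B) := by
  intro N
  induction N using Nat.strong_induction_on with
  | _ N IH =>
  intro G A B hmeas
  set k := minSep G A B with hk
  rcases Nat.eq_zero_or_pos k with hk0 | hkpos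
  · rw [hk0]; exact hasDP_zero G A B
  by_cases hAB : (A ∩ B).Nonempty
  · -- a common vertex of `A` and `B`: remove it, recurse, and add back a trivial path
    obtain ⟨v, hvA, hvB⟩ := hAB
    set G' := Gres G ({v}ᶜ) with hG'
    have hG'le : G' ≤ G := Gres_le G _
    have hsep' : ∀ T : Set V, GSep G' (A \ {v}) (B \ {v}) T → GSep G A B (insert v T) := by
      intro T hT a b w ha hb
      by_cases hvw : v ∈ w.support
      · exact ⟨v, Set.mem_insert _ _, hvw⟩
      · have hedges : ∀ e ∈ w.edges, e ∈ G'.edgeSet := by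
          intro e he
          induction e using Sym2.ind with
          | _ x y =>
            rw [SimpleGraph.mem_edgeSet]
            refine ⟨w.edges_subset_edgeSet he, ?_, ?_⟩
            · exact fun h => hvw (h ▸ w.fst_mem_support_of_mem_edges he)
            · exact fun h => hvw (h ▸ w.snd_mem_support_of_mem_edges he)
        obtain ⟨t, htT, htsup⟩ := hT (w.transfer G' hedges)
          ⟨ha, fun h => hvw ((Set.mem_singleton_iff.1 h) ▸ w.start_mem_support)⟩
          ⟨hb, fun h => hvw ((Set.mem_singleton_iff.1 h) ▸ w.end_mem_support)⟩
        exact ⟨t, Set.mem_insert_of_mem _ htT, by rwa [Walk.support_transfer] at htsup⟩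
    have hlb : k - 1 ≤ minSep G' (A \ {v}) (B \ {v}) := le_minSep (fun T hT => by
      have h1 : k ≤ (insert v T).ncard := hk ▸ minSep_le (hsep' T hT)
      have h2 := Set.ncard_insert_le v T
      omega)
    have hintercard : ((A \ {v}) ∩ (B \ {v})).ncard < (A ∩ B).ncard := by
      have hseteq : (A \ {v}) ∩ (B \ {v}) = (A ∩ B) \ {v} := by
        ext x
        simp only [Set.mem_inter_iff, Set.mem_diff]
        tauto
      rw [hseteq]
      exact Set.ncard_diff_singleton_lt_of_mem ⟨hvA, hvB⟩ (Set.toFinite _)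
    have hm : meas G' (A \ {v}) (B \ {v}) < meas G A B :=
      meas_lt_of_inter (edgeSet_mono hG'le) hintercard
    have hfam : HasDisjointPaths G' (A \ {v}) (B \ {v}) (k - 1) :=
      hasDP_downward hlb (IH _ (lt_of_lt_of_le hm hmeas) G' _ _ le_rfl)
    obtain ⟨a, b, w, hw, hd⟩ := hfam
    have hgoal : HasDisjointPaths G A B ((k - 1) + 1) := by
      refine hasDP_cons (fun i => a i) (fun i => b i) (fun i => walkUp hG'le (w i))
        (fun i => ⟨(hw i).1.1, (hw i).2.1.1, walkUp_isPath _ (hw i).2.2⟩) ?_ hvA hvB ?_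
      · intro i j hij
        rw [walkUp_support, walkUp_support]
        exact hd i j hij
      · intro i
        rw [walkUp_support]
        exact not_mem_support_gres_compl (w i) (fun h => (hw i).1.2 (h ▸ rfl))
    have : (k - 1) + 1 = k := by omega
    rwa [this] at hgoal
  · -- `A` and `B` are disjoint
    have hABempty : A ∩ B = ∅ := Set.not_nonempty_iff_eq_empty.1 hAB
    by_cases hcase : ∃ S : Set V, GSep G A B S ∧ S.ncard = k ∧
        (∃ x y, G.Adj x y ∧ x ∉ Aside G A S ∪ S) ∧
        (∃ x y, G.Adj x y ∧ x ∉ Aside G B S ∪ S)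
    · -- halving case
      obtain ⟨S, hSsep, hScard, ⟨xA, yA, hadjA, hxA⟩, ⟨xB, yB, hadjB, hxB⟩⟩ := hcase
      set GA := Gres G (Aside G A S ∪ S) with hGA
      set GB := Gres G (Aside G B S ∪ S) with hGB
      have hAlb : k ≤ minSep GA A S :=
        le_minSep (fun T hT => hk ▸ minSep_le (sep_res_A hSsep T hT))
      have hBlb : k ≤ minSep GB S B :=
        le_minSep (fun T hT => hk ▸ minSep_le (sep_res_B hSsep T hT))
      have hAss : GA.edgeSet ⊂ G.edgeSet := by
        refine (Set.ssubset_iff_of_subset (edgeSet_mono (Gres_le _ _))).2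
          ⟨s(xA, yA), hadjA, ?_⟩
        rw [SimpleGraph.mem_edgeSet]
        exact fun h => hxA h.2.1
      have hBss : GB.edgeSet ⊂ G.edgeSet := by
        refine (Set.ssubset_iff_of_subset (edgeSet_mono (Gres_le _ _))).2
          ⟨s(xB, yB), hadjB, ?_⟩
        rw [SimpleGraph.mem_edgeSet]
        exact fun h => hxB h.2.1
      have famA : HasDisjointPaths GA A S k := hasDP_downward hAlb
        (IH _ (lt_of_lt_of_le (meas_lt_of_edges hAss) hmeas) GA A S le_rfl)
      have famB : HasDisjointPaths GB S B k := hasDP_downward hBlb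
        (IH _ (lt_of_lt_of_le (meas_lt_of_edges hBss) hmeas) GB S B le_rfl)
      exact glue hSsep hScard (hasDP_mono_graph (Gres_le _ _) famA)
        (hasDP_mono_graph (Gres_le _ _) famB)
    · -- each minimum separator is contained in `A` or in `B`
      have hsubAB : ∀ S : Set V, GSep G A B S → S.ncard = k → S ⊆ A ∨ S ⊆ B := by
        intro S hSsep hScard
        by_cases hfb : ∀ x y, G.Adj x y → x ∈ Aside G A S ∪ S
        · exact Or.inr (sep_subset_right hSsep hScard
            (fun T hT => hk ▸ minSep_le hT) hABempty hfb)
        · by_cases hfa : ∀ x y, G.Adj x y → x ∈ Aside G B S ∪ S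
          · refine Or.inl (sep_subset_right (sep_symm hSsep) hScard
              (fun T hT => hk ▸ minSep_le (sep_symm hT)) ?_ hfa)
            rw [Set.inter_comm]
            exact hABempty
          · exfalso
            apply hcase
            push_neg at hfb hfa
            obtain ⟨x1, y1, h1, h1'⟩ := hfb
            obtain ⟨x2, y2, h2, h2'⟩ := hfa
            exact ⟨S, hSsep, hScard, ⟨x1, y1, h1, h1'⟩, ⟨x2, y2, h2, h2'⟩⟩
      -- there is an `A`–`B` walk
      have hexists : ∃ (a b : V) (_ : G.Walk a b), a ∈ A ∧ b ∈ B := by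
        by_contra h
        push_neg at h
        have hsep0 : GSep G A B ∅ := by
          intro a b w ha hb
          exact (h a b w ha hb).elim
        have := hk ▸ minSep_le hsep0
        simp only [Set.ncard_empty] at this
        omega
      obtain ⟨a₁, b₁, w₁, ha₁, hb₁⟩ := hexists
      -- a shortest `A`–`B` walk
      set L := sInf {n | ∃ (a b : V) (w : G.Walk a b), a ∈ A ∧ b ∈ B ∧ w.length = n}
        with hL
      have hLne : {n | ∃ (a b : V) (w : G.Walk a b), a ∈ A ∧ b ∈ B ∧ w.length = n}.Nonempty :=
        ⟨w₁.length, a₁, b₁, w₁, ha₁, hb₁, rfl⟩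
      obtain ⟨a₀, b₀, w₀, ha₀, hb₀, hlen⟩ := Nat.sInf_mem hLne
      have hminlen : ∀ (x y : V) (w' : G.Walk x y), x ∈ A → y ∈ B → L ≤ w'.length :=
        fun x y w' hx hy => Nat.sInf_le ⟨x, y, w', hx, hy, rfl⟩
      have hpmin : w₀.bypass.length ≤ L := by
        rw [hL]
        exact le_of_le_of_eq w₀.length_bypass_le hlen
      have hne : a₀ ≠ b₀ := by
        rintro rfl
        have : a₀ ∈ A ∩ B := ⟨ha₀, hb₀⟩
        rw [hABempty] at this
        exact this.elim
      rcases hbp : w₀.bypass with _ | @⟨_, c, _, hadj, q⟩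
      · exact absurd rfl hne
      · have hqlen : q.length + 1 ≤ L := by
          have := hpmin
          rw [hbp] at this
          simpa [Walk.length_cons] using this
        have hcA : c ∉ A := by
          intro hcA
          have := hminlen c b₀ q hcA hb₀
          omega
        set G' := GdelE G s(a₀, c) with hG'
        have hG'le : G' ≤ G := GdelE_le G _
        by_cases hsub : k ≤ minSep G' A B
        · have hss : G'.edgeSet ⊂ G.edgeSet := by
            refine (Set.ssubset_iff_of_subset (edgeSet_mono hG'le)).2
              ⟨s(a₀, c), hadj, ?_⟩
            rw [SimpleGraph.mem_edgeSet]
            exact fun h => h.2 rfl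
          have fam := hasDP_downward hsub
            (IH _ (lt_of_lt_of_le (meas_lt_of_edges hss) hmeas) G' A B le_rfl)
          exact hasDP_mono_graph hG'le fam
        · push_neg at hsub
          obtain ⟨T, hTsep, hTcard⟩ := exists_minSep G' A B
          have hTlt : T.ncard < k := by rw [hTcard]; exact hsub
          have hsepX : GSep G A B (insert a₀ T) := by
            intro x y w hx hy
            by_cases he : s(a₀, c) ∈ w.edges
            · exact ⟨a₀, Set.mem_insert _ _, w.fst_mem_support_of_mem_edges he⟩
            · have hedges : ∀ e ∈ w.edges, e ∈ G'.edgeSet := by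
                intro e hew
                induction e using Sym2.ind with
                | _ u z =>
                  rw [SimpleGraph.mem_edgeSet]
                  exact ⟨w.edges_subset_edgeSet hew, fun hh => he (hh ▸ hew)⟩
              obtain ⟨t, htT, htsup⟩ := hTsep (w.transfer G' hedges) hx hy
              exact ⟨t, Set.mem_insert_of_mem _ htT,
                by rwa [Walk.support_transfer] at htsup⟩
          have hsepY : GSep G A B (insert c T) := by
            intro x y w hx hy
            by_cases he : s(a₀, c) ∈ w.edges
            · exact ⟨c, Set.mem_insert _ _, w.snd_mem_support_of_mem_edges he⟩
            · have hedges : ∀ e ∈ w.edges, e ∈ G'.edgeSet := by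
                intro e hew
                induction e using Sym2.ind with
                | _ u z =>
                  rw [SimpleGraph.mem_edgeSet]
                  exact ⟨w.edges_subset_edgeSet hew, fun hh => he (hh ▸ hew)⟩
              obtain ⟨t, htT, htsup⟩ := hTsep (w.transfer G' hedges) hx hy
              exact ⟨t, Set.mem_insert_of_mem _ htT,
                by rwa [Walk.support_transfer] at htsup⟩
          have hXcard : (insert a₀ T).ncard = k := by
            have h1 : k ≤ (insert a₀ T).ncard := hk ▸ minSep_le hsepX
            have h2 := Set.ncard_insert_le a₀ T
            omega
          have hYcard : (insert c T).ncard = k := by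
            have h1 : k ≤ (insert c T).ncard := hk ▸ minSep_le hsepY
            have h2 := Set.ncard_insert_le c T
            omega
          rcases hsubAB _ hsepX hXcard with hXA | hXB
          · rcases hsubAB _ hsepY hYcard with hYA | hYB
            · exact absurd (hYA (Set.mem_insert _ _)) hcA
            · have hT0 : T = ∅ := by
                rw [← Set.subset_empty_iff, ← hABempty]
                exact fun x hx => ⟨hXA (Set.mem_insert_of_mem _ hx),
                  hYB (Set.mem_insert_of_mem _ hx)⟩
              have hk1 : k = 1 := by
                rw [hT0] at hXcard
                simpa using hXcard.symm
              rw [hk1]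
              exact hasDP_one (Walk.cons hadj q) ha₀ hb₀ (hbp ▸ w₀.bypass_isPath)
          · have : a₀ ∈ A ∩ B := ⟨ha₀, hXB (Set.mem_insert _ _)⟩
            rw [hABempty] at this
            exact this.elim

theorem menger [Fintype V] (G : SimpleGraph V) (A B : Set V) :
    HasDisjointPaths G A B (minSep G A B) :=
  mengerAux (meas G A B) G A B le_rfl

end MainInduction

section Final
variable {V : Type*} [DecidableEq V] [Fintype V]

lemma hasDP_bdd (G : SimpleGraph V) (V₂ A : Set V) :
    BddAbove {q | HasDisjointPaths G A V₂ q} :=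
  ⟨Nat.card V, fun q hq => by
    have := hasDP_le_sep hq (sep_univ G A V₂)
    rwa [Set.ncard_univ] at this⟩

lemma max_mem (G : SimpleGraph V) (V₂ A : Set V) :
    HasDisjointPaths G A V₂ (maxDisjointPaths G V₂ A) := by
  have h0 : 0 ∈ {q | HasDisjointPaths G A V₂ q} := hasDP_zero G A V₂
  have h := Nat.sSup_mem ⟨0, h0⟩ (hasDP_bdd G V₂ A)
  rw [Set.mem_setOf_eq] at h
  exact h

lemma le_max {G : SimpleGraph V} {V₂ A : Set V} {q : ℕ}
    (h : HasDisjointPaths G A V₂ q) : q ≤ maxDisjointPaths G V₂ A :=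
  le_csSup (hasDP_bdd G V₂ A) h

lemma max_eq_minSep (G : SimpleGraph V) (V₂ A : Set V) :
    maxDisjointPaths G V₂ A = minSep G A V₂ := by
  apply le_antisymm
  · obtain ⟨S, hS, hcard⟩ := exists_minSep G A V₂
    rw [← hcard]
    exact hasDP_le_sep (max_mem G V₂ A) hS
  · exact le_max (menger G A V₂)

/-- The set of vertices all of whose walks to `V₂` meet `S`. -/
def Xcap (G : SimpleGraph V) (V₂ S : Set V) : Set V :=
  {v | ∀ (t : V) (w : G.Walk v t), t ∈ V₂ → ∃ s ∈ S, s ∈ w.support}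

/-- Boundary of a vertex set towards `V₂`. -/
def bdry (G : SimpleGraph V) (V₂ X : Set V) : Set V :=
  {v | v ∈ X ∧ (v ∈ V₂ ∨ ∃ u, G.Adj v u ∧ u ∉ X)}

lemma bdry_sep {G : SimpleGraph V} {V₂ A X : Set V} (hAX : A ⊆ X) :
    GSep G A V₂ (bdry G V₂ X) := by
  have aux : ∀ (a t : V) (w : G.Walk a t), a ∈ X → t ∈ V₂ →
      ∃ s ∈ bdry G V₂ X, s ∈ w.support := by
    intro a t w
    induction w with
    | nil => exact fun ha ht => ⟨_, ⟨ha, Or.inl ht⟩, by simp⟩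
    | @cons u c d hadj p ih =>
      intro hu ht
      by_cases hc : c ∈ X
      · obtain ⟨s, hs, hsup⟩ := ih hc ht
        exact ⟨s, hs, by rw [Walk.support_cons]; exact List.mem_cons_of_mem _ hsup⟩
      · exact ⟨u, ⟨hu, Or.inr ⟨c, hadj, hc⟩⟩, Walk.start_mem_support _⟩
  intro a b w ha hb
  exact aux a b w (hAX ha) hb

lemma subset_Xcap {G : SimpleGraph V} {V₂ A S : Set V} (h : GSep G A V₂ S) :
    A ⊆ Xcap G V₂ S :=
  fun _ ha _ w ht => h w ha ht

lemma bdry_Xcap_subset {G : SimpleGraph V} {V₂ S : Set V} :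
    bdry G V₂ (Xcap G V₂ S) ⊆ S := by
  rintro v ⟨hvX, hv⟩
  rcases hv with hv | ⟨u, hadj, hu⟩
  · obtain ⟨s, hs, hsup⟩ := hvX v Walk.nil hv
    rw [Walk.support_nil, List.mem_singleton] at hsup
    rwa [← hsup]
  · simp only [Xcap, Set.mem_setOf_eq] at hu
    push_neg at hu
    obtain ⟨t, w, ht, hno⟩ := hu
    obtain ⟨s, hs, hsup⟩ := hvX t (Walk.cons hadj w) ht
    rw [Walk.support_cons, List.mem_cons] at hsup
    rcases hsup with rfl | hsup
    · exact hs
    · exact absurd hsup (hno s hs)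

lemma minSep_submodular (G : SimpleGraph V) (V₂ A B : Set V) :
    minSep G (A ∪ B) V₂ + minSep G (A ∩ B) V₂ ≤ minSep G A V₂ + minSep G B V₂ := by
  obtain ⟨SA, hSA, hSAcard⟩ := exists_minSep G A V₂
  obtain ⟨SB, hSB, hSBcard⟩ := exists_minSep G B V₂
  set XA := Xcap G V₂ SA with hXA
  set XB := Xcap G V₂ SB with hXB
  have hsepU : GSep G (A ∪ B) V₂ (bdry G V₂ (XA ∪ XB)) :=
    bdry_sep (Set.union_subset_union (subset_Xcap hSA) (subset_Xcap hSB))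
  have hsepI : GSep G (A ∩ B) V₂ (bdry G V₂ (XA ∩ XB)) :=
    bdry_sep (Set.inter_subset_inter (subset_Xcap hSA) (subset_Xcap hSB))
  have h1 : minSep G (A ∪ B) V₂ ≤ (bdry G V₂ (XA ∪ XB)).ncard := minSep_le hsepU
  have h2 : minSep G (A ∩ B) V₂ ≤ (bdry G V₂ (XA ∩ XB)).ncard := minSep_le hsepI
  have i1 : bdry G V₂ (XA ∪ XB) ⊆ bdry G V₂ XA ∪ bdry G V₂ XB := by
    rintro v ⟨hvX, hcond⟩
    rcases hvX with hvA | hvB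
    · refine Or.inl ⟨hvA, ?_⟩
      rcases hcond with h | ⟨u, hadj, hu⟩
      · exact Or.inl h
      · exact Or.inr ⟨u, hadj, fun h => hu (Or.inl h)⟩
    · refine Or.inr ⟨hvB, ?_⟩
      rcases hcond with h | ⟨u, hadj, hu⟩
      · exact Or.inl h
      · exact Or.inr ⟨u, hadj, fun h => hu (Or.inr h)⟩
  have i2 : bdry G V₂ (XA ∩ XB) ⊆ bdry G V₂ XA ∪ bdry G V₂ XB := by
    rintro v ⟨⟨hvA, hvB⟩, hcond⟩
    rcases hcond with h | ⟨u, hadj, hu⟩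
    · exact Or.inl ⟨hvA, Or.inl h⟩
    · rcases (not_and_or.1 (fun hc => hu ⟨hc.1, hc.2⟩)) with h | h
      · exact Or.inl ⟨hvA, Or.inr ⟨u, hadj, h⟩⟩
      · exact Or.inr ⟨hvB, Or.inr ⟨u, hadj, h⟩⟩
  have i3 : bdry G V₂ (XA ∪ XB) ∩ bdry G V₂ (XA ∩ XB) ⊆
      bdry G V₂ XA ∩ bdry G V₂ XB := by
    rintro v ⟨⟨_, hcondU⟩, ⟨⟨hvA, hvB⟩, _⟩⟩
    rcases hcondU with h | ⟨u, hadj, hu⟩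
    · exact ⟨⟨hvA, Or.inl h⟩, ⟨hvB, Or.inl h⟩⟩
    · exact ⟨⟨hvA, Or.inr ⟨u, hadj, fun h => hu (Or.inl h)⟩⟩,
        ⟨hvB, Or.inr ⟨u, hadj, fun h => hu (Or.inr h)⟩⟩⟩
  have e1 := Set.ncard_union_add_ncard_inter (bdry G V₂ (XA ∪ XB))
    (bdry G V₂ (XA ∩ XB)) (Set.toFinite _) (Set.toFinite _)
  have e2 := Set.ncard_union_add_ncard_inter (bdry G V₂ XA) (bdry G V₂ XB)
    (Set.toFinite _) (Set.toFinite _)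
  have m1 : (bdry G V₂ (XA ∪ XB) ∪ bdry G V₂ (XA ∩ XB)).ncard ≤
      (bdry G V₂ XA ∪ bdry G V₂ XB).ncard :=
    Set.ncard_le_ncard (Set.union_subset i1 i2) (Set.toFinite _)
  have m2 : (bdry G V₂ (XA ∪ XB) ∩ bdry G V₂ (XA ∩ XB)).ncard ≤
      (bdry G V₂ XA ∩ bdry G V₂ XB).ncard :=
    Set.ncard_le_ncard i3 (Set.toFinite _)
  have f1 : (bdry G V₂ XA).ncard ≤ SA.ncard :=
    Set.ncard_le_ncard bdry_Xcap_subset (Set.toFinite _)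
  have f2 : (bdry G V₂ XB).ncard ≤ SB.ncard :=
    Set.ncard_le_ncard bdry_Xcap_subset (Set.toFinite _)
  omega

end Final

/-- For vertex sets `V₁, V₂` of a finite graph `G`, the function
`A ↦ κ(A)` (maximum number of disjoint `A`–`V₂` paths), for `A ⊆ V₁`, is the rank
function of a matroid on `V₁`: it vanishes on `∅`, is monotone, increases by at most one
upon adding an element, and is submodular. -/
theorem maxDisjointPaths_is_matroid_rank
    {V : Type*} [Fintype V] (G : SimpleGraph V) (V₁ V₂ : Set V) :
    maxDisjointPaths G V₂ ∅ = 0 ∧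
    (∀ A A' : Set V, A ⊆ A' → A' ⊆ V₁ →
      maxDisjointPaths G V₂ A ≤ maxDisjointPaths G V₂ A') ∧
    (∀ A : Set V, A ⊆ V₁ → ∀ x ∈ V₁,
      maxDisjointPaths G V₂ (insert x A) ≤ maxDisjointPaths G V₂ A + 1) ∧
    (∀ A B : Set V, A ⊆ V₁ → B ⊆ V₁ →
      maxDisjointPaths G V₂ (A ∪ B) + maxDisjointPaths G V₂ (A ∩ B) ≤
        maxDisjointPaths G V₂ A + maxDisjointPaths G V₂ B) := by
  classical
  refine ⟨?_, ?_, ?_, ?_⟩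
  · -- κ(∅) = 0
    have hsub : {q | HasDisjointPaths G ∅ V₂ q} = {0} := by
      apply Set.Subset.antisymm
      · intro q hq
        rcases Nat.eq_zero_or_pos q with h | h
        · simp [h]
        · obtain ⟨a, b, w, hw, hd⟩ := hq
          exact absurd (hw ⟨0, h⟩).1 (Set.notMem_empty _)
      · intro q hq
        rw [Set.mem_singleton_iff] at hq
        subst hq
        exact hasDP_zero G ∅ V₂
    rw [maxDisjointPaths, hsub, csSup_singleton]
  · -- monotone
    intro A A' hAA' _
    exact le_max (hasDP_mono_start hAA' (max_mem G V₂ A))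
  · -- adding one element increases κ by at most one
    intro A _ x _
    set q := maxDisjointPaths G V₂ (insert x A) with hq
    obtain ⟨a, b, w, hw, hd⟩ := max_mem G V₂ (insert x A)
    by_cases hall : ∀ i, a i ∈ A
    · have : HasDisjointPaths G A V₂ q := ⟨a, b, w, fun i => ⟨hall i, (hw i).2⟩, hd⟩
      have := le_max this
      omega
    · push_neg at hall
      obtain ⟨i₀, hi₀⟩ := hall
      have hqpos : 0 < q := i₀.pos
      have hax : a i₀ = x := by
        rcases Set.mem_insert_iff.1 (hw i₀).1 with h | h
        · exact h
        · exact absurd h hi₀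
      -- skip index i₀
      set f : Fin (q - 1) → Fin q := fun i =>
        ⟨if (i : ℕ) < (i₀ : ℕ) then (i : ℕ) else (i : ℕ) + 1, by
          have := i.isLt
          split <;> omega⟩ with hf
      have hfval : ∀ i : Fin (q - 1),
          (f i : ℕ) = if (i : ℕ) < (i₀ : ℕ) then (i : ℕ) else (i : ℕ) + 1 :=
        fun i => rfl
      have hfne : ∀ i, f i ≠ i₀ := by
        intro i h
        have := congrArg Fin.val h
        rw [hfval] at this
        split at this <;> omega
      have hfinj : Function.Injective f := by
        intro i j h
        have := congrArg Fin.val h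
        rw [hfval, hfval] at this
        apply Fin.ext
        split at this <;> split at this <;> omega
      have hAmem : ∀ i, a (f i) ∈ A := by
        intro i
        rcases Set.mem_insert_iff.1 (hw (f i)).1 with h | h
        · exfalso
          apply hfne i
          apply Fin.ext
          by_contra hne
          have hx1 : x ∈ (w (f i)).support := h ▸ Walk.start_mem_support _
          have hx2 : x ∈ (w i₀).support := hax ▸ Walk.start_mem_support _
          exact hd (f i) i₀ (hfne i) hx1 hx2
        · exact h
      have hfam : HasDisjointPaths G A V₂ (q - 1) :=
        ⟨fun i => a (f i), fun i => b (f i), fun i => w (f i),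
          fun i => ⟨hAmem i, (hw (f i)).2⟩,
          fun i j hij => hd (f i) (f j) (fun h => hij (hfinj h))⟩
      have := le_max hfam
      omega
  · -- submodularity
    intro A B _ _
    rw [max_eq_minSep, max_eq_minSep, max_eq_minSep, max_eq_minSep]
    exact minSep_submodular G V₂ A B
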